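/- On the set of rank-one orthogonal projections of a separable complex Hilbert space, the coarsest topology making all transition-probability functions P ↦ tr(PQ) (for rank-one projections Q) continuous coincides with the topology induced by the operator norm. -/

import Mathlib

open MeasureTheory Topology Filter
open scoped InnerProductSpace

/-- The rank-one operator `|φ⟩⟨φ|`. -/
noncomputable def rankOne {H : Type*} [NormedAddCommGroup H] [InnerProductSpace ℂ H]
    (φ : H) : H →L[ℂ] H := (innerSL ℂ φ).smulRight φ

/-- The set of rank-one orthogonal projections (pure states / projective Hilbert space). -/
noncomputable def projSet (H : Type*) [NormedAddCommGroup H] [InnerProductSpace ℂ H] :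
    Set (H →L[ℂ] H) := {T | ∃ φ : H, ‖φ‖ = 1 ∧ T = rankOne φ}

/-- The trace of an operator computed along a Hilbert basis. -/
noncomputable def traceAlong {H ι : Type*} [NormedAddCommGroup H] [InnerProductSpace ℂ H]
    (b : HilbertBasis ι ℂ H) (A : H →L[ℂ] H) : ℂ :=
  ∑' i, inner ℂ (b i) (A (b i))

lemma rankOne_apply {H : Type*} [NormedAddCommGroup H] [InnerProductSpace ℂ H]
    (φ x : H) : rankOne φ x = (⟪φ, x⟫_ℂ) • φ := rfl

lemma traceAlong_mul_rankOne {H ι : Type*} [NormedAddCommGroup H] [InnerProductSpace ℂ H]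
    [CompleteSpace H] (b : HilbertBasis ι ℂ H) (A : H →L[ℂ] H) (φ : H) :
    traceAlong b (A * rankOne φ) = ⟪φ, A φ⟫_ℂ := by
  have h : ∀ i, (⟪b i, (A * rankOne φ) (b i)⟫_ℂ) = ⟪φ, b i⟫_ℂ * ⟪b i, A φ⟫_ℂ := by
    intro i
    simp [rankOne_apply, ContinuousLinearMap.mul_apply, inner_smul_right, _root_.map_smul, mul_comm]
  simp only [traceAlong, h]
  exact b.tsum_inner_mul_inner φ (A φ)

lemma rankOne_sub_norm_le {H : Type*} [NormedAddCommGroup H] [InnerProductSpace ℂ H]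
    (ψ φ : H) (hψ : ‖ψ‖ = 1) (hφ : ‖φ‖ = 1) :
    ‖rankOne ψ - rankOne φ‖ ≤ 2 * ‖ψ - φ‖ := by
  refine ContinuousLinearMap.opNorm_le_bound _ (by positivity) fun x => ?_
  have key : (rankOne ψ - rankOne φ) x = (⟪ψ - φ, x⟫_ℂ) • ψ + (⟪φ, x⟫_ℂ) • (ψ - φ) := by
    simp [rankOne_apply, inner_sub_left, sub_smul, smul_sub]
  rw [key]
  calc ‖(⟪ψ - φ, x⟫_ℂ) • ψ + (⟪φ, x⟫_ℂ) • (ψ - φ)‖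
      ≤ ‖(⟪ψ - φ, x⟫_ℂ) • ψ‖ + ‖(⟪φ, x⟫_ℂ) • (ψ - φ)‖ := norm_add_le _ _
    _ ≤ ‖ψ - φ‖ * ‖x‖ * 1 + 1 * ‖x‖ * ‖ψ - φ‖ := by
        rw [norm_smul, norm_smul, hψ, ← hφ]
        gcongr
        · exact norm_inner_le_norm _ _
        · exact norm_inner_le_norm _ _
    _ = 2 * ‖ψ - φ‖ * ‖x‖ := by ring

lemma rankOne_smul_unit {H : Type*} [NormedAddCommGroup H] [InnerProductSpace ℂ H]
    (ψ : H) (c : ℂ) (hc : ‖c‖ = 1) : rankOne (c • ψ) = rankOne ψ := by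
  ext x
  simp only [rankOne_apply, inner_smul_left, smul_smul]
  have : (starRingEnd ℂ) c * ⟪ψ, x⟫_ℂ * c = (‖c‖:ℂ)^2 * ⟪ψ, x⟫_ℂ := by
    rw [mul_comm _ c, ← mul_assoc, Complex.mul_conj']
  rw [this, hc]
  norm_num

lemma exists_phase (z : ℂ) : ∃ c : ℂ, ‖c‖ = 1 ∧ c * z = (‖z‖ : ℂ) := by
  rcases eq_or_ne z 0 with h | h
  · exact ⟨1, by simp [h]⟩
  · refine ⟨(starRingEnd ℂ) z / ‖z‖, by simp [norm_div, h], ?_⟩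
    rw [div_mul_eq_mul_div, mul_comm, Complex.mul_conj']
    rw [pow_two, mul_div_assoc]
    rw [div_self (by exact_mod_cast norm_ne_zero_iff.mpr h)]
    ring

lemma rankOne_sub_norm_lt {H : Type*} [NormedAddCommGroup H] [InnerProductSpace ℂ H]
    (ψ φ : H) (hψ : ‖ψ‖ = 1) (hφ : ‖φ‖ = 1) (ε : ℝ) (hε : 0 < ε)
    (h : 1 - ‖⟪φ, ψ⟫_ℂ‖ ^ 2 < ε ^ 2 / 8) : ‖rankOne ψ - rankOne φ‖ < ε := by
  obtain ⟨c, hc, hcz⟩ := exists_phase ⟪φ, ψ⟫_ℂ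
  set t : ℝ := ‖⟪φ, ψ⟫_ℂ‖ with ht
  have ht1 : t ≤ 1 := by
    simpa [hψ, hφ] using norm_inner_le_norm (𝕜 := ℂ) φ ψ
  have ht0 : 0 ≤ t := norm_nonneg _
  have hψ' : ‖c • ψ‖ = 1 := by simp [norm_smul, hc, hψ]
  have hip : ⟪φ, c • ψ⟫_ℂ = (t : ℂ) := by rw [inner_smul_right, hcz]
  have hns : ‖c • ψ - φ‖ ^ 2 = 2 - 2 * t := by
    rw [@norm_sub_sq ℂ, hψ', hφ]
    have : ⟪c • ψ, φ⟫_ℂ = ((t : ℂ)) := by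
      rw [← inner_conj_symm, hip]
      simp
    rw [this]
    simp; ring
  have hlt : ‖c • ψ - φ‖ ^ 2 < (ε / 2) ^ 2 := by
    rw [hns]; nlinarith
  have hd : ‖c • ψ - φ‖ < ε / 2 :=
    lt_of_pow_lt_pow_left₀ 2 (by positivity) hlt
  calc ‖rankOne ψ - rankOne φ‖ = ‖rankOne (c • ψ) - rankOne φ‖ := by
        rw [rankOne_smul_unit ψ c hc]
    _ ≤ 2 * ‖c • ψ - φ‖ := rankOne_sub_norm_le _ _ hψ' hφ
    _ < 2 * (ε / 2) := by linarith
    _ = ε := by ring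

lemma traceAlong_rankOne_re {H ι : Type*} [NormedAddCommGroup H] [InnerProductSpace ℂ H]
    [CompleteSpace H] (b : HilbertBasis ι ℂ H) (ψ φ : H) :
    (traceAlong b (rankOne ψ * rankOne φ)).re = ‖⟪φ, ψ⟫_ℂ‖ ^ 2 := by
  rw [traceAlong_mul_rankOne, rankOne_apply, inner_smul_right]
  rw [← inner_conj_symm ψ φ, mul_comm, Complex.mul_conj']
  norm_cast

theorem stmt7 {H ι : Type*} [NormedAddCommGroup H] [InnerProductSpace ℂ H] [CompleteSpace H]
    [Nontrivial H] [SecondCountableTopology H] (b : HilbertBasis ι ℂ H) :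
    (⨅ Q : ↥(projSet H), TopologicalSpace.induced
        (fun P : ↥(projSet H) => (traceAlong b (P.1 * Q.1)).re) inferInstance) =
      (instTopologicalSpaceSubtype : TopologicalSpace ↥(projSet H)) := by
  have hcont2 : ∀ Q : ↥(projSet H),
      Continuous (fun P : ↥(projSet H) => (traceAlong b (P.1 * Q.1)).re) := by
    intro Q
    obtain ⟨φ, hφ, hQ⟩ := Q.2
    have heq : (fun P : ↥(projSet H) => (traceAlong b (P.1 * Q.1)).re)
        = fun P : ↥(projSet H) => (⟪φ, P.1 φ⟫_ℂ).re := by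
      funext P
      rw [hQ, traceAlong_mul_rankOne]
    rw [heq]
    exact Complex.continuous_re.comp (Continuous.inner continuous_const
      ((ContinuousLinearMap.apply ℂ H φ).continuous.comp continuous_subtype_val))
  refine le_antisymm ?_ (le_iInf fun Q => continuous_iff_le_induced.mp (hcont2 Q))
  set τ := (⨅ Q : ↥(projSet H), TopologicalSpace.induced
      (fun P : ↥(projSet H) => (traceAlong b (P.1 * Q.1)).re) inferInstance) with hτ
  have hcont : Continuous[τ, _] (Subtype.val : ↥(projSet H) → (H →L[ℂ] H)) := by
    rw [@continuous_iff_continuousAt _ _ τ _]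
    intro P₀
    rw [ContinuousAt, Metric.tendsto_nhds]
    intro ε hε
    obtain ⟨φ₀, hφ₀, hP₀⟩ := P₀.2
    have hh : Continuous[τ, _]
        (fun P : ↥(projSet H) => (traceAlong b (P.1 * P₀.1)).re) :=
      continuous_iff_le_induced.mpr (iInf_le _ P₀)
    have hU : IsOpen[τ] ((fun P : ↥(projSet H) => (traceAlong b (P.1 * P₀.1)).re) ⁻¹'
        Set.Ioi (1 - ε ^ 2 / 8)) := hh.isOpen_preimage _ isOpen_Ioi
    have hmem : P₀ ∈ ((fun P : ↥(projSet H) => (traceAlong b (P.1 * P₀.1)).re) ⁻¹'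
        Set.Ioi (1 - ε ^ 2 / 8)) := by
      simp only [Set.mem_preimage, Set.mem_Ioi]
      rw [show (P₀ : H →L[ℂ] H) = rankOne φ₀ from hP₀, traceAlong_rankOne_re]
      rw [show ⟪φ₀, φ₀⟫_ℂ = ((1:ℝ) : ℂ) by
        rw [inner_self_eq_norm_sq_to_K, hφ₀]; norm_num]
      simp
      positivity
    filter_upwards [hU.mem_nhds hmem] with P hP
    obtain ⟨ψ, hψ, hPeq⟩ := P.2
    rw [Set.mem_preimage, Set.mem_Ioi, hPeq, hP₀, traceAlong_rankOne_re] at hP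
    rw [dist_eq_norm, hPeq, hP₀]
    exact rankOne_sub_norm_lt ψ φ₀ hψ hφ₀ ε hε (by linarith)
  exact continuous_iff_le_induced.mp hcont
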